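/- Let p be a prime with p ≡ 1 (mod 4) dividing both the central value e and the corner value a of a primitive magic square of squares. Then p also divides the opposite corner value i, and modulo p one has b ≢ 0, with the congruences c² ≡ −b², d² ≡ −b², h² ≡ −b², f² ≡ b², and g² ≡ b² (mod p). -/

import Mathlib

/-- A magic square of squares: integers `a,…,i` whose squares, arranged in a
3×3 grid with rows `(a²,b²,c²)`, `(d²,e²,f²)`, `(g²,h²,i²)`, are pairwise
distinct and all rows, columns and both main diagonals sum to `T`. -/
def IsMagicSquareOfSquares (a b c d e f g h i T : ℤ) : Prop :=
  ([a^2, b^2, c^2, d^2, e^2, f^2, g^2, h^2, i^2] : List ℤ).Pairwise (· ≠ ·) ∧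
  a^2 + b^2 + c^2 = T ∧ d^2 + e^2 + f^2 = T ∧ g^2 + h^2 + i^2 = T ∧
  a^2 + d^2 + g^2 = T ∧ b^2 + e^2 + h^2 = T ∧ c^2 + f^2 + i^2 = T ∧
  a^2 + e^2 + i^2 = T ∧ c^2 + e^2 + g^2 = T

/-- A magic square of squares is primitive if the gcd of its nine entries is 1. -/
def IsPrimitive (a b c d e f g h i : ℤ) : Prop :=
  Int.gcd (a^2) (Int.gcd (b^2) (Int.gcd (c^2) (Int.gcd (d^2) (Int.gcd (e^2)
    (Int.gcd (f^2) (Int.gcd (g^2) (Int.gcd (h^2) (i^2)))))))) = 1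

theorem corner_zero_residue_class (a b c d e f g h i T : ℤ)
    (hms : IsMagicSquareOfSquares a b c d e f g h i T)
    (hprim : IsPrimitive a b c d e f g h i)
    (p : ℕ) (hp : p.Prime) (hp1 : p % 4 = 1)
    (hde : (p : ℤ) ∣ e) (hda : (p : ℤ) ∣ a) :
    (p : ℤ) ∣ i ∧ (b : ZMod p) ≠ 0 ∧
    (c : ZMod p)^2 = -(b : ZMod p)^2 ∧
    (d : ZMod p)^2 = -(b : ZMod p)^2 ∧
    (h : ZMod p)^2 = -(b : ZMod p)^2 ∧
    (f : ZMod p)^2 = (b : ZMod p)^2 ∧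
    (g : ZMod p)^2 = (b : ZMod p)^2 := by
  haveI : Fact p.Prime := ⟨hp⟩
  obtain ⟨_, h1, h2, h3, h4, h5, h6, h7, h8⟩ := hms
  have hA : (a : ZMod p) = 0 := (ZMod.intCast_zmod_eq_zero_iff_dvd a p).mpr hda
  have hE : (e : ZMod p) = 0 := (ZMod.intCast_zmod_eq_zero_iff_dvd e p).mpr hde
  have H1 : (a : ZMod p)^2 + (b : ZMod p)^2 + (c : ZMod p)^2 = (T : ZMod p) := by
    exact_mod_cast congrArg (Int.cast : ℤ → ZMod p) h1
  have H2 : (d : ZMod p)^2 + (e : ZMod p)^2 + (f : ZMod p)^2 = (T : ZMod p) := by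
    exact_mod_cast congrArg (Int.cast : ℤ → ZMod p) h2
  have H3 : (g : ZMod p)^2 + (h : ZMod p)^2 + (i : ZMod p)^2 = (T : ZMod p) := by
    exact_mod_cast congrArg (Int.cast : ℤ → ZMod p) h3
  have H4 : (a : ZMod p)^2 + (d : ZMod p)^2 + (g : ZMod p)^2 = (T : ZMod p) := by
    exact_mod_cast congrArg (Int.cast : ℤ → ZMod p) h4
  have H5 : (b : ZMod p)^2 + (e : ZMod p)^2 + (h : ZMod p)^2 = (T : ZMod p) := by
    exact_mod_cast congrArg (Int.cast : ℤ → ZMod p) h5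
  have H6 : (c : ZMod p)^2 + (f : ZMod p)^2 + (i : ZMod p)^2 = (T : ZMod p) := by
    exact_mod_cast congrArg (Int.cast : ℤ → ZMod p) h6
  have H7 : (a : ZMod p)^2 + (e : ZMod p)^2 + (i : ZMod p)^2 = (T : ZMod p) := by
    exact_mod_cast congrArg (Int.cast : ℤ → ZMod p) h7
  have H8 : (c : ZMod p)^2 + (e : ZMod p)^2 + (g : ZMod p)^2 = (T : ZMod p) := by
    exact_mod_cast congrArg (Int.cast : ℤ → ZMod p) h8
  simp only [hA, hE, ne_eq, OfNat.ofNat_ne_zero, not_false_eq_true, zero_pow, zero_add, add_zero] at H1 H2 H4 H5 H7 H8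
  -- H1 : b²+c²=T, H2 : d²+f²=T, H3 : g²+h²+i²=T, H4 : d²+g²=T,
  -- H5 : b²+h²=T, H6 : c²+f²+i²=T, H7 : i²=T, H8 : c²+g²=T
  have hT : (T : ZMod p) = 0 := by linear_combination -H8 + H6 - H7 - H2 + H4
  have sq_zero : ∀ x : ZMod p, x ^ 2 = 0 → x = 0 := fun x hx =>
    (pow_eq_zero_iff two_ne_zero).mp hx
  have hi2 : (i : ZMod p)^2 = 0 := by linear_combination H7 + hT
  have hi0 : (i : ZMod p) = 0 := sq_zero _ hi2
  have hdi : (p : ℤ) ∣ i := (ZMod.intCast_zmod_eq_zero_iff_dvd i p).mp hi0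
  refine ⟨hdi, ?_, by linear_combination H1 + hT, by linear_combination H4 - H8 + H1 + hT,
    by linear_combination H5 + hT, by linear_combination H6 - H7 - H1 - hT,
    by linear_combination H8 - H1⟩
  intro hb
  have dvd_of : ∀ x : ℤ, (x : ZMod p) = 0 → (p : ℤ) ∣ x ^ 2 := fun x hx => by
    have := (ZMod.intCast_zmod_eq_zero_iff_dvd x p).mp hx
    exact Dvd.dvd.trans this (dvd_pow_self x two_ne_zero)
  have hc0 : (c : ZMod p) = 0 := sq_zero _ (by
    have : (c : ZMod p)^2 = -(b : ZMod p)^2 := by linear_combination H1 + hT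
    rw [this, hb]; ring)
  have hg0 : (g : ZMod p) = 0 := sq_zero _ (by
    have : (g : ZMod p)^2 = (b : ZMod p)^2 := by linear_combination H8 - H1
    rw [this, hb]; ring)
  have hd0 : (d : ZMod p) = 0 := sq_zero _ (by
    have : (d : ZMod p)^2 = -(b : ZMod p)^2 := by linear_combination H4 - H8 + H1 + hT
    rw [this, hb]; ring)
  have hf0 : (f : ZMod p) = 0 := sq_zero _ (by
    have : (f : ZMod p)^2 = (b : ZMod p)^2 := by linear_combination H6 - H7 - H1 - hT
    rw [this, hb]; ring)
  have hh0 : (h : ZMod p) = 0 := sq_zero _ (by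
    have : (h : ZMod p)^2 = -(b : ZMod p)^2 := by linear_combination H5 + hT
    rw [this, hb]; ring)
  have hdvd : (p : ℤ) ∣ (1 : ℤ) := by
    have : (p : ℤ) ∣ (Int.gcd (a^2) (Int.gcd (b^2) (Int.gcd (c^2) (Int.gcd (d^2) (Int.gcd (e^2)
        (Int.gcd (f^2) (Int.gcd (g^2) (Int.gcd (h^2) (i^2)))))))) : ℤ) :=
      Int.dvd_coe_gcd (dvd_of a hA) (Int.dvd_coe_gcd (dvd_of b hb) (Int.dvd_coe_gcd (dvd_of c hc0)
        (Int.dvd_coe_gcd (dvd_of d hd0) (Int.dvd_coe_gcd (dvd_of e hE) (Int.dvd_coe_gcd (dvd_of f hf0)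
        (Int.dvd_coe_gcd (dvd_of g hg0) (Int.dvd_coe_gcd (dvd_of h hh0) (dvd_of i hi0))))))))
    rwa [hprim] at this
  have := Int.le_of_dvd one_pos hdvd
  have := hp.two_le
  omega
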